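/- Let n ≥ 1 and x₀, v₀, x₁, v₁ ∈ ℝⁿ. For every C² curve γ : [0,1] → ℝⁿ satisfying the Hermite boundary conditions γ(0) = x₀, γ'(0) = v₀, γ(1) = x₁, γ'(1) = v₁, one has ∫₀¹ ‖γ''(t)‖² dt ≥ E(x₀, v₀, x₁, v₁), where E(x₀, v₀, x₁, v₁) := 12‖x₁ − x₀ − v₀‖² − 12⟨x₁ − x₀ − v₀, v₁ − v₀⟩ + 4‖v₁ − v₀‖². -/

import Mathlib

open Set MeasureTheory intervalIntegral
open scoped InnerProductSpace

/-- Lower bound for the acceleration energy: every `C²` curve `γ : [0,1] → ℝⁿ` satisfying the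
Hermite boundary conditions `γ(0) = x₀`, `γ'(0) = v₀`, `γ(1) = x₁`, `γ'(1) = v₁` has
`∫₀¹ ‖γ''‖² ≥ 12‖x₁ − x₀ − v₀‖² − 12⟨x₁ − x₀ − v₀, v₁ − v₀⟩ + 4‖v₁ − v₀‖²`. -/
theorem acceleration_energy_lower_bound (n : ℕ) (hn : 1 ≤ n)
    (x₀ v₀ x₁ v₁ : EuclideanSpace ℝ (Fin n))
    (γ : ℝ → EuclideanSpace ℝ (Fin n))
    (hγ : ContDiffOn ℝ 2 γ (Icc (0:ℝ) 1))
    (h0 : γ 0 = x₀) (h0' : derivWithin γ (Icc (0:ℝ) 1) 0 = v₀)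
    (h1 : γ 1 = x₁) (h1' : derivWithin γ (Icc (0:ℝ) 1) 1 = v₁) :
    12 * ‖x₁ - x₀ - v₀‖^2 - 12 * ⟪x₁ - x₀ - v₀, v₁ - v₀⟫_ℝ + 4 * ‖v₁ - v₀‖^2
      ≤ ∫ t in (0:ℝ)..1,
          ‖derivWithin (derivWithin γ (Icc (0:ℝ) 1)) (Icc (0:ℝ) 1) t‖^2 := by
  set g := derivWithin γ (Icc (0:ℝ) 1) with hgdef
  set a := derivWithin g (Icc (0:ℝ) 1) with hadef
  have hIu : UniqueDiffOn ℝ (Icc (0:ℝ) 1) := uniqueDiffOn_Icc one_pos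
  have hγd : DifferentiableOn ℝ γ (Icc (0:ℝ) 1) := hγ.differentiableOn two_ne_zero
  have hg1 : ContDiffOn ℝ 1 g (Icc (0:ℝ) 1) := hγ.derivWithin hIu (by norm_num)
  have hgd : DifferentiableOn ℝ g (Icc (0:ℝ) 1) := hg1.differentiableOn one_ne_zero
  have hgc : ContinuousOn g (Icc (0:ℝ) 1) := hgd.continuousOn
  have hγc : ContinuousOn γ (Icc (0:ℝ) 1) := hγd.continuousOn
  have hac : ContinuousOn a (Icc (0:ℝ) 1) := hg1.continuousOn_derivWithin hIu le_rfl
  -- derivatives at interior points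
  have hgderiv : ∀ t ∈ Ioo (0:ℝ) 1, HasDerivAt γ (g t) t := by
    intro t ht
    exact ((hγd t (Ioo_subset_Icc_self ht)).hasDerivWithinAt).hasDerivAt
      (Icc_mem_nhds ht.1 ht.2)
  have haderiv : ∀ t ∈ Ioo (0:ℝ) 1, HasDerivAt g (a t) t := by
    intro t ht
    exact ((hgd t (Ioo_subset_Icc_self ht)).hasDerivWithinAt).hasDerivAt
      (Icc_mem_nhds ht.1 ht.2)
  have haint : IntervalIntegrable a volume 0 1 := hac.intervalIntegrable_of_Icc zero_le_one
  -- first moment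
  have hm1 : (∫ t in (0:ℝ)..1, a t) = v₁ - v₀ := by
    rw [integral_eq_sub_of_hasDeriv_right_of_le zero_le_one hgc
      (fun t ht => ((haderiv t ht).hasDerivWithinAt)) haint, h1', h0']
  -- second moment via integration by parts
  have hm2 : (∫ t in (0:ℝ)..1, (1 - t) • a t) = x₁ - x₀ - v₀ := by
    have hFc : ContinuousOn (fun t : ℝ => (1 - t) • g t + γ t) (Icc (0:ℝ) 1) :=
      ((continuous_const.sub continuous_id).continuousOn.smul hgc).add hγc
    have hFint : IntervalIntegrable (fun t : ℝ => (1 - t) • a t) volume 0 1 :=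
      (((continuous_const.sub continuous_id).continuousOn.smul hac)).intervalIntegrable_of_Icc
        zero_le_one
    have hFd : ∀ t ∈ Ioo (0:ℝ) 1,
        HasDerivAt (fun t : ℝ => (1 - t) • g t + γ t) ((1 - t) • a t) t := by
      intro t ht
      have h1d : HasDerivAt (fun t : ℝ => (1:ℝ) - t) (-1) t := by
        simpa using (hasDerivAt_id t).const_sub 1
      have := (h1d.smul (haderiv t ht)).add (hgderiv t ht)
      exact this.congr_deriv (by rw [neg_one_smul]; abel)
    rw [integral_eq_sub_of_hasDeriv_right_of_le zero_le_one hFc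
      (fun t ht => (hFd t ht).hasDerivWithinAt) hFint]
    simp [h0, h1, h0']
    abel
  -- the comparison polynomial
  set Δx := x₁ - x₀ - v₀ with hΔx
  set Δv := v₁ - v₀ with hΔv
  set c₀ := (4:ℝ) • Δv - (6:ℝ) • Δx with hc₀
  set c₁ := (12:ℝ) • Δx - (6:ℝ) • Δv with hc₁
  set p : ℝ → EuclideanSpace ℝ (Fin n) := fun t => c₀ + (1 - t) • c₁ with hp
  have hpc : Continuous p := by
    apply continuous_const.add
    exact (continuous_const.sub continuous_id).smul continuous_const
  have hsmint : IntervalIntegrable (fun t : ℝ => (1 - t) • a t) volume 0 1 :=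
    (((continuous_const.sub continuous_id).continuousOn.smul hac)).intervalIntegrable_of_Icc
      zero_le_one
  have hIa2 : IntervalIntegrable (fun t : ℝ => ‖a t‖^2) volume 0 1 :=
    ((hac.norm).pow 2).intervalIntegrable_of_Icc zero_le_one
  have hIip : IntervalIntegrable (fun t : ℝ => ⟪p t, a t⟫_ℝ) volume 0 1 :=
    (hpc.continuousOn.inner hac).intervalIntegrable_of_Icc zero_le_one
  have hIp2 : IntervalIntegrable (fun t : ℝ => ‖p t‖^2) volume 0 1 :=
    ((hpc.norm).pow 2).intervalIntegrable 0 1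
  -- value of the cross term
  have hS : (∫ t in (0:ℝ)..1, ⟪p t, a t⟫_ℝ) = ⟪c₀, Δv⟫_ℝ + ⟪c₁, Δx⟫_ℝ := by
    have e1 : (fun t : ℝ => ⟪p t, a t⟫_ℝ)
        = fun t : ℝ => (innerSL ℝ c₀) (a t) + (innerSL ℝ c₁) ((1 - t) • a t) := by
      funext t
      simp [hp, inner_add_left, real_inner_smul_left, inner_smul_right, Finset.mul_sum, mul_assoc]
    have hL1 := (innerSL ℝ c₀).intervalIntegral_comp_comm haint
    have hL2 := (innerSL ℝ c₁).intervalIntegral_comp_comm hsmint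
    have hi1 : IntervalIntegrable (fun t : ℝ => (innerSL ℝ c₀) (a t)) volume 0 1 :=
      ((innerSL ℝ c₀).continuous.comp_continuousOn hac).intervalIntegrable_of_Icc zero_le_one
    have hi2 : IntervalIntegrable (fun t : ℝ => (innerSL ℝ c₁) ((1 - t) • a t)) volume 0 1 :=
      ((innerSL ℝ c₁).continuous.comp_continuousOn
        (((continuous_const.sub continuous_id).continuousOn.smul hac))).intervalIntegrable_of_Icc
        zero_le_one
    rw [e1, intervalIntegral.integral_add hi1 hi2, hL1, hL2, hm1, hm2]
    simp
  -- elementary scalar integrals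
  have h12 : (∫ t in (0:ℝ)..1, (1 - t)) = 1/2 := by
    rw [intervalIntegral.integral_sub intervalIntegrable_const
      (Continuous.intervalIntegrable (by fun_prop) 0 1)]
    simp [integral_id]
    norm_num
  have h13 : (∫ t in (0:ℝ)..1, (1 - t)^2) = 1/3 := by
    rw [intervalIntegral.integral_comp_sub_left (fun x : ℝ => x^2) 1]
    norm_num [integral_pow]
  -- value of ∫ ‖p‖²
  have hA : (∫ t in (0:ℝ)..1, ‖p t‖^2)
      = ‖c₀‖^2 + ⟪c₀, c₁⟫_ℝ + ‖c₁‖^2 / 3 := by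
    have e2 : (fun t : ℝ => ‖p t‖^2)
        = fun t : ℝ => ‖c₀‖^2 + ((1 - t) * (2 * ⟪c₀, c₁⟫_ℝ) + (1 - t)^2 * ‖c₁‖^2) := by
      funext t
      rw [hp]
      rw [norm_add_sq_real, inner_smul_right, norm_smul]
      simp [mul_pow, sq_abs]
      ring
    rw [e2, intervalIntegral.integral_add intervalIntegrable_const
        (Continuous.intervalIntegrable (by fun_prop) 0 1),
      intervalIntegral.integral_add (Continuous.intervalIntegrable (by fun_prop) 0 1)
        (Continuous.intervalIntegrable (by fun_prop) 0 1),
      intervalIntegral.integral_mul_const, intervalIntegral.integral_mul_const, h12, h13]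
    norm_num
    ring
  -- nonnegativity of ∫ ‖a − p‖²
  have hnn : (0:ℝ) ≤ ∫ t in (0:ℝ)..1, ‖p t - a t‖^2 :=
    intervalIntegral.integral_nonneg zero_le_one (fun t _ => sq_nonneg _)
  have hsplit : (∫ t in (0:ℝ)..1, ‖p t - a t‖^2)
      = (∫ t in (0:ℝ)..1, ‖a t‖^2) - 2 * (∫ t in (0:ℝ)..1, ⟪p t, a t⟫_ℝ)
        + (∫ t in (0:ℝ)..1, ‖p t‖^2) := by
    rw [← intervalIntegral.integral_const_mul,
      ← intervalIntegral.integral_sub hIa2 (hIip.const_mul 2),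
      ← intervalIntegral.integral_add (hIa2.sub (hIip.const_mul 2)) hIp2]
    congr 1
    funext t
    rw [@norm_sub_sq_real]
    ring
  rw [hsplit, hS, hA] at hnn
  -- final algebra
  have e₀ : ⟪c₀, Δv⟫_ℝ = 4 * ‖Δv‖^2 - 6 * ⟪Δx, Δv⟫_ℝ := by
    simp only [hc₀, inner_sub_left, real_inner_smul_left, real_inner_self_eq_norm_sq]
  have e₁ : ⟪c₁, Δx⟫_ℝ = 12 * ‖Δx‖^2 - 6 * ⟪Δx, Δv⟫_ℝ := by
    simp only [hc₁, inner_sub_left, real_inner_smul_left, real_inner_self_eq_norm_sq,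
      real_inner_comm Δv Δx]
  have e₂ : ‖c₀‖^2 = 16 * ‖Δv‖^2 - 48 * ⟪Δx, Δv⟫_ℝ + 36 * ‖Δx‖^2 := by
    rw [← real_inner_self_eq_norm_sq]
    simp only [hc₀, inner_sub_left, inner_sub_right, real_inner_smul_left, real_inner_smul_right,
      real_inner_self_eq_norm_sq, real_inner_comm Δv Δx, norm_smul, mul_pow, Real.norm_ofNat]
    ring
  have e₃ : ⟪c₀, c₁⟫_ℝ = 84 * ⟪Δx, Δv⟫_ℝ - 24 * ‖Δv‖^2 - 72 * ‖Δx‖^2 := by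
    simp only [hc₀, hc₁, inner_sub_left, inner_sub_right, real_inner_smul_left,
      real_inner_smul_right, real_inner_self_eq_norm_sq, real_inner_comm Δv Δx]
    ring
  have e₄ : ‖c₁‖^2 = 144 * ‖Δx‖^2 - 144 * ⟪Δx, Δv⟫_ℝ + 36 * ‖Δv‖^2 := by
    rw [← real_inner_self_eq_norm_sq]
    simp only [hc₁, inner_sub_left, inner_sub_right, real_inner_smul_left, real_inner_smul_right,
      real_inner_self_eq_norm_sq, real_inner_comm Δv Δx, norm_smul, mul_pow, Real.norm_ofNat]
    ring
  rw [e₀, e₁, e₂, e₃, e₄] at hnn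
  linarith [hnn]
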